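/- Let U ⊆ ℝ^d × ℝ^d be a Lebesgue measurable set of positive measure. Then for all sufficiently small δ > 0 there exists a measurable subset V ⊆ U of positive measure such that for every (x,y) ∈ V, the three points (x+δΔ, y), (x, y+δΔ), and (x+δΔ, y+δΔ) all belong to U, where Δ = (1,...,1) ∈ ℝ^d. -/

import Mathlib

open MeasureTheory Filter Topology Set
open scoped symmDiff ENNReal

/-- Marginal-preserving volume exchange: if `U ⊆ ℝ^d × ℝ^d` has positive measure,
then for all sufficiently small `δ > 0` there is `V ⊆ U` of positive measure such that
for every `(x,y) ∈ V` the three translates `(x+δΔ,y)`, `(x,y+δΔ)`, `(x+δΔ,y+δΔ)`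
lie in `U`, where `Δ = (1,…,1)`. -/
theorem stmt0 (d : ℕ) (U : Set ((Fin d → ℝ) × (Fin d → ℝ)))
    (hU : MeasurableSet U) (hpos : 0 < volume U) :
    ∃ δ₀ > (0:ℝ), ∀ δ : ℝ, 0 < δ → δ < δ₀ →
      ∃ V : Set ((Fin d → ℝ) × (Fin d → ℝ)), V ⊆ U ∧ MeasurableSet V ∧ 0 < volume V ∧
        ∀ p ∈ V,
          (p.1 + δ • (fun _ => (1:ℝ)), p.2) ∈ U ∧
          (p.1, p.2 + δ • (fun _ => (1:ℝ))) ∈ U ∧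
          (p.1 + δ • (fun _ => (1:ℝ)), p.2 + δ • (fun _ => (1:ℝ))) ∈ U := by
  classical
  haveI : (volume : Measure ((Fin d → ℝ) × (Fin d → ℝ))).IsAddHaarMeasure :=
    (Measure.prod.instIsAddHaarMeasure _ _ : ((volume : Measure (Fin d → ℝ)).prod
      (volume : Measure (Fin d → ℝ))).IsAddHaarMeasure)
  -- a finite-measure positive-measure piece of U
  have hUnion : U = ⋃ n : ℕ, U ∩ Metric.ball 0 n := by
    ext x
    simp only [Set.mem_iUnion, Set.mem_inter_iff, Metric.mem_ball, dist_zero_right]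
    constructor
    · intro hx
      obtain ⟨n, hn⟩ := exists_nat_gt ‖x‖
      exact ⟨n, hx, hn⟩
    · rintro ⟨n, hx, -⟩; exact hx
  have hex : ∃ n : ℕ, 0 < volume (U ∩ Metric.ball (0:(Fin d → ℝ) × (Fin d → ℝ)) n) := by
    by_contra h
    push_neg at h
    have : volume U = 0 := by
      rw [hUnion]
      exact measure_iUnion_null fun n => le_antisymm (h n) zero_le
    exact hpos.ne' this
  obtain ⟨n, hn⟩ := hex
  set S : Set ((Fin d → ℝ) × (Fin d → ℝ)) := U ∩ Metric.ball 0 n with hS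
  have hSm : MeasurableSet S := hU.inter measurableSet_ball
  have hSU : S ⊆ U := Set.inter_subset_left
  have hSfin : volume S ≠ ∞ :=
    ((measure_mono Set.inter_subset_right).trans_lt measure_ball_lt_top).ne
  set c := volume S with hc
  -- translation continuity
  set F : C(((Fin d → ℝ) × (Fin d → ℝ)) × ((Fin d → ℝ) × (Fin d → ℝ)), (Fin d → ℝ) × (Fin d → ℝ)) := ⟨fun q => q.2 + q.1, by fun_prop⟩ with hF
  set T : C((Fin d → ℝ) × (Fin d → ℝ), C((Fin d → ℝ) × (Fin d → ℝ), (Fin d → ℝ) × (Fin d → ℝ))) := F.curry with hT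
  have hTv : ∀ v : (Fin d → ℝ) × (Fin d → ℝ), ∀ x : (Fin d → ℝ) × (Fin d → ℝ), T v x = x + v := fun v x => rfl
  have hmp : ∀ v : (Fin d → ℝ) × (Fin d → ℝ), MeasurePreserving (T v) (volume : Measure ((Fin d → ℝ) × (Fin d → ℝ))) volume := fun v =>
    measurePreserving_add_right volume v
  have htend : Tendsto (fun v : (Fin d → ℝ) × (Fin d → ℝ) => volume ((T v ⁻¹' S) ∆ (T 0 ⁻¹' S))) (𝓝 0) (𝓝 0) :=
    tendsto_measure_symmDiff_preimage_nhds_zero (T.continuous.tendsto 0)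
      (Eventually.of_forall hmp) (hmp 0) hSm.nullMeasurableSet hSfin
  have hT0 : T (0:(Fin d → ℝ) × (Fin d → ℝ)) ⁻¹' S = S := by
    ext x; simp [hTv]
  rw [hT0] at htend
  have hc4 : (0:ℝ≥0∞) < c / 4 := ENNReal.div_pos hn.ne' (by norm_num)
  have hev : ∀ᶠ v : (Fin d → ℝ) × (Fin d → ℝ) in 𝓝 0, volume ((T v ⁻¹' S) ∆ S) < c / 4 :=
    htend.eventually_lt_const hc4 |>.mono (fun v hv => hv)
  rw [Metric.eventually_nhds_iff] at hev
  obtain ⟨ε, hε, hball⟩ := hev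
  refine ⟨ε, hε, fun δ hδ hδε => ?_⟩
  -- the three translation vectors
  set Δ : Fin d → ℝ := fun _ => (1:ℝ) with hΔ
  have hΔnorm : ‖Δ‖ ≤ 1 := by
    refine (pi_norm_le_iff_of_nonneg zero_le_one).2 fun i => ?_
    simp [hΔ]
  set v₁ : (Fin d → ℝ) × (Fin d → ℝ) := (δ • Δ, 0) with hv₁
  set v₂ : (Fin d → ℝ) × (Fin d → ℝ) := (0, δ • Δ) with hv₂
  set v₃ : (Fin d → ℝ) × (Fin d → ℝ) := (δ • Δ, δ • Δ) with hv₃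
  have hsm : ‖δ • Δ‖ ≤ δ := by
    rw [norm_smul, Real.norm_eq_abs, abs_of_pos hδ]
    calc δ * ‖Δ‖ ≤ δ * 1 := by gcongr
    _ = δ := mul_one δ
  have hnorm : ∀ v ∈ ({v₁, v₂, v₃} : Set ((Fin d → ℝ) × (Fin d → ℝ))), dist v 0 < ε := by
    intro v hv
    rw [dist_zero_right]
    rcases hv with rfl | rfl | rfl <;>
      · refine lt_of_le_of_lt ?_ hδε
        simp only [hv₁, hv₂, hv₃, Prod.norm_def]
        simp [hsm, hδ.le, max_le_iff]
  have key : ∀ v ∈ ({v₁, v₂, v₃} : Set ((Fin d → ℝ) × (Fin d → ℝ))), volume (S \ ((fun x => x + v) ⁻¹' U)) < c / 4 := by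
    intro v hv
    have h1 := hball (hnorm v hv)
    refine lt_of_le_of_lt (measure_mono ?_) h1
    intro x hx
    have hxS : x ∈ S := hx.1
    have hxnU : x + v ∉ U := hx.2
    have hxnS : x ∉ T v ⁻¹' S := fun h => hxnU (hSU (by rwa [Set.mem_preimage, hTv] at h))
    rw [Set.symmDiff_def]
    exact Or.inr ⟨hxS, hxnS⟩
  -- define V
  set A₁ : Set ((Fin d → ℝ) × (Fin d → ℝ)) := (fun x => x + v₁) ⁻¹' U with hA₁
  set A₂ : Set ((Fin d → ℝ) × (Fin d → ℝ)) := (fun x => x + v₂) ⁻¹' U with hA₂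
  set A₃ : Set ((Fin d → ℝ) × (Fin d → ℝ)) := (fun x => x + v₃) ⁻¹' U with hA₃
  have hAm : ∀ v : (Fin d → ℝ) × (Fin d → ℝ), MeasurableSet ((fun x => x + v) ⁻¹' U) := fun v =>
    hU.preimage (measurable_id.add_const v)
  refine ⟨S ∩ A₁ ∩ A₂ ∩ A₃, fun p hp => hSU hp.1.1.1,
    ((hSm.inter (hAm v₁)).inter (hAm v₂)).inter (hAm v₃), ?_, ?_⟩
  · -- positivity
    by_contra h
    push_neg at h
    have hV0 : volume (S ∩ A₁ ∩ A₂ ∩ A₃) = 0 := le_antisymm h zero_le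
    have hcov : S ⊆ (S ∩ A₁ ∩ A₂ ∩ A₃) ∪ ((S \ A₁) ∪ (S \ A₂) ∪ (S \ A₃)) := by
      intro p hp
      by_cases h1 : p ∈ A₁
      · by_cases h2 : p ∈ A₂
        · by_cases h3 : p ∈ A₃
          · exact Or.inl ⟨⟨⟨hp, h1⟩, h2⟩, h3⟩
          · exact Or.inr (Or.inr ⟨hp, h3⟩)
        · exact Or.inr (Or.inl (Or.inr ⟨hp, h2⟩))
      · exact Or.inr (Or.inl (Or.inl ⟨hp, h1⟩))
    have hle : c ≤ volume (S ∩ A₁ ∩ A₂ ∩ A₃) + (volume (S \ A₁) + volume (S \ A₂)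
        + volume (S \ A₃)) := by
      calc c ≤ volume ((S ∩ A₁ ∩ A₂ ∩ A₃) ∪ ((S \ A₁) ∪ (S \ A₂) ∪ (S \ A₃))) :=
            measure_mono hcov
        _ ≤ volume (S ∩ A₁ ∩ A₂ ∩ A₃) + volume ((S \ A₁) ∪ (S \ A₂) ∪ (S \ A₃)) :=
            measure_union_le _ _
        _ ≤ volume (S ∩ A₁ ∩ A₂ ∩ A₃) + (volume ((S \ A₁) ∪ (S \ A₂)) + volume (S \ A₃)) := by
            gcongr; exact measure_union_le _ _
        _ ≤ volume (S ∩ A₁ ∩ A₂ ∩ A₃) + (volume (S \ A₁) + volume (S \ A₂) + volume (S \ A₃)) := by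
            gcongr; exact measure_union_le _ _
    rw [hV0, zero_add] at hle
    have h1 := key v₁ (by simp)
    have h2 := key v₂ (by simp)
    have h3 := key v₃ (by simp)
    have hsum : volume (S \ A₁) + volume (S \ A₂) + volume (S \ A₃) < c := by
      calc volume (S \ A₁) + volume (S \ A₂) + volume (S \ A₃)
          < c / 4 + c / 4 + c / 4 :=
            ENNReal.add_lt_add (ENNReal.add_lt_add h1 h2) h3
        _ = 3 * (c / 4) := by ring
        _ < 4 * (c / 4) := by
            rw [ENNReal.mul_lt_mul_iff_left hc4.ne' (by
              exact (ENNReal.div_lt_top hSfin (by norm_num)).ne)]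
            norm_num
        _ = c := ENNReal.mul_div_cancel (by norm_num) (by norm_num)
    exact absurd (hle.trans_lt hsum) (lt_irrefl c)
  · -- membership conditions
    rintro ⟨x, y⟩ hp
    obtain ⟨⟨⟨hpS, hp1⟩, hp2⟩, hp3⟩ := hp
    refine ⟨?_, ?_, ?_⟩
    · have := hp1
      simpa [hA₁, hv₁, Prod.ext_iff] using this
    · have := hp2
      simpa [hA₂, hv₂, Prod.ext_iff] using this
    · have := hp3
      simpa [hA₃, hv₃, Prod.ext_iff] using this
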